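/- Let T be the subgroup of diagonal invertible matrices in GL₃(F). Then the set D = {(x + d + y·d², r + s·d + d²) : x, y, r, s ∈ F, ys ≠ 1} ∪ {(x + d², r + d + s·d²) : x, r ∈ F, s ∈ F×} ∪ {(x + y·d + d², r + d) : x, r ∈ F, y ∈ F×} ∪ {(x + d², y + d) : x, y ∈ F} is a fundamental domain for the action of T on H_q: every (α, β) ∈ H_q lies in the T-orbit of exactly one element of D. -/

import Mathlib

/-- The finite upper half-space: pairs `(α, β)` with `1, α, β` linearly
independent over `F`. -/
def UHS (F : Type*) [Field F] (E : Type*) [Field E] [Algebra F E] : Set (E × E) :=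
  {z | LinearIndependent F ![1, z.1, z.2]}

/-- The denominator of the fractional linear action. -/
def mden (F : Type*) [Field F] (E : Type*) [Field E] [Algebra F E]
    (M : Matrix (Fin 3) (Fin 3) F) (z : E × E) : E :=
  algebraMap F E (M 2 0) * z.1 + algebraMap F E (M 2 1) * z.2 + algebraMap F E (M 2 2)

/-- The fractional linear action of a `3 × 3` matrix on a pair. -/
def mact (F : Type*) [Field F] (E : Type*) [Field E] [Algebra F E]
    (M : Matrix (Fin 3) (Fin 3) F) (z : E × E) : E × E :=
  ((algebraMap F E (M 0 0) * z.1 + algebraMap F E (M 0 1) * z.2 + algebraMap F E (M 0 2)) /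
      mden F E M z,
   (algebraMap F E (M 1 0) * z.1 + algebraMap F E (M 1 1) * z.2 + algebraMap F E (M 1 2)) /
      mden F E M z)

open Polynomial in
lemma cube_li {F : Type*} [Field F] {E : Type*} [Field E] [Algebra F E]
    (δ : F) (hδ : ¬∃ x : F, x ^ 3 = δ) (d : E) (hd : d ^ 3 = algebraMap F E δ) :
    LinearIndependent F ![1, d, d ^ 2] := by
  have hirr : Irreducible (X ^ 3 - C δ) :=
    X_pow_sub_C_irreducible_of_prime (by norm_num) (fun b hb => hδ ⟨b, hb⟩)
  have hmin : minpoly F d = X ^ 3 - C δ :=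
    (minpoly.eq_of_irreducible_of_monic hirr (by simp [hd])
      (monic_X_pow_sub_C δ (by norm_num))).symm
  have h := linearIndependent_pow (K := F) d
  rw [hmin, natDegree_X_pow_sub_C] at h
  have : (fun i : Fin 3 => d ^ (i : ℕ)) = ![1, d, d ^ 2] := by
    funext i; fin_cases i <;> simp
  rwa [this] at h


noncomputable def dgl {F : Type*} [Field F] (a b : F) (ha : a ≠ 0) (hb : b ≠ 0) :
    GL (Fin 3) F :=
  Matrix.GeneralLinearGroup.mkOfDetNeZero (Matrix.diagonal ![a, b, 1]) (by
    rw [Matrix.det_diagonal, Fin.prod_univ_three]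
    simp [ha, hb])
lemma mact_dgl {F : Type*} [Field F] {E : Type*} [Field E] [Algebra F E]
    (a b : F) (ha : a ≠ 0) (hb : b ≠ 0) (w : E × E) :
    mact F E (dgl a b ha hb).val w = (algebraMap F E a * w.1, algebraMap F E b * w.2) := by
  have h : (dgl a b ha hb).val = Matrix.diagonal ![a, b, 1] := rfl
  rw [h]
  simp [mact, mden, Matrix.diagonal]
lemma dgl_diag {F : Type*} [Field F] (a b : F) (ha : a ≠ 0) (hb : b ≠ 0) :
    ∀ i j : Fin 3, i ≠ j → (dgl a b ha hb).val i j = 0 := by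
  intro i j hij
  have h : (dgl a b ha hb).val = Matrix.diagonal ![a, b, 1] := rfl
  rw [h]
  exact Matrix.diagonal_apply_ne _ hij

theorem fundamental_domain_torus (F : Type*) [Field F] [Fintype F]
    (E : Type*) [Field E] [Algebra F E] (h3 : Module.finrank F E = 3)
    (δ : F) (hδ : ¬∃ x : F, x ^ 3 = δ) (d : E) (hd : d ^ 3 = algebraMap F E δ) :
    ∀ z ∈ UHS F E, ∃! w : E × E,
      (w ∈ {z' : E × E | ∃ x y r s : F, y * s ≠ 1 ∧
              z' = (algebraMap F E x + d + algebraMap F E y * d ^ 2,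
                    algebraMap F E r + algebraMap F E s * d + d ^ 2)} ∪
            {z' : E × E | ∃ x r s : F, s ≠ 0 ∧
              z' = (algebraMap F E x + d ^ 2,
                    algebraMap F E r + d + algebraMap F E s * d ^ 2)} ∪
            {z' : E × E | ∃ x r y : F, y ≠ 0 ∧
              z' = (algebraMap F E x + algebraMap F E y * d + d ^ 2,
                    algebraMap F E r + d)} ∪
            {z' : E × E | ∃ x y : F,
              z' = (algebraMap F E x + d ^ 2, algebraMap F E y + d)}) ∧
      ∃ m : GL (Fin 3) F,
        (∀ i j : Fin 3, i ≠ j → m.val i j = 0) ∧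
        mact F E m.val w = z := by
  intro z hz
  have hli := cube_li δ hδ d hd
  have hfd : FiniteDimensional F E := FiniteDimensional.of_finrank_eq_succ h3
  let B : Module.Basis (Fin 3) F E := basisOfLinearIndependentOfCardEqFinrank hli (by simp [h3])
  have hB : ⇑B = ![1, d, d ^ 2] := coe_basisOfLinearIndependentOfCardEqFinrank hli _
  have hrep : ∀ ξ : E, ∃ c0 c1 c2 : F, ξ = algebraMap F E c0 + algebraMap F E c1 * d +
      algebraMap F E c2 * d ^ 2 := by
    intro ξ
    refine ⟨B.repr ξ 0, B.repr ξ 1, B.repr ξ 2, ?_⟩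
    conv_lhs => rw [← B.sum_repr ξ]
    simp [Fin.sum_univ_three, hB, Algebra.smul_def]
  have hinj : ∀ x0 x1 x2 y0 y1 y2 : F,
      algebraMap F E x0 + algebraMap F E x1 * d + algebraMap F E x2 * d ^ 2 =
        algebraMap F E y0 + algebraMap F E y1 * d + algebraMap F E y2 * d ^ 2 →
      x0 = y0 ∧ x1 = y1 ∧ x2 = y2 := by
    intro x0 x1 x2 y0 y1 y2 h
    have h2 := Fintype.linearIndependent_iff.mp hli ![x0 - y0, x1 - y1, x2 - y2] (by
      simp only [Fin.sum_univ_three, Matrix.cons_val_zero, Matrix.cons_val_one, Matrix.head_cons,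
        Matrix.cons_val_two, Matrix.tail_cons, Algebra.smul_def, map_sub]
      rw [mul_one]
      linear_combination h)
    exact ⟨by have := h2 0; simpa [sub_eq_zero] using this,
      by have := h2 1; simpa [sub_eq_zero] using this,
      by have := h2 2; simpa [sub_eq_zero] using this⟩
  obtain ⟨a0, a1, a2, hα⟩ := hrep z.1
  obtain ⟨b0, b1, b2, hβ⟩ := hrep z.2
  -- the independence determinant
  have hdet : a1 * b2 ≠ a2 * b1 := by
    intro hc
    have hzi := Fintype.linearIndependent_iff.mp (hz : LinearIndependent F ![1, z.1, z.2])
    obtain ⟨c1, c2, hcne, hc1, hc2⟩ : ∃ c1 c2 : F, (c1 ≠ 0 ∨ c2 ≠ 0) ∧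
        c1 * a1 + c2 * b1 = 0 ∧ c1 * a2 + c2 * b2 = 0 := by
      by_cases h1 : a1 ≠ 0
      · exact ⟨b1, -a1, Or.inr (neg_ne_zero.mpr h1), by ring, by linear_combination -hc⟩
      by_cases h2 : a2 ≠ 0
      · exact ⟨b2, -a2, Or.inr (neg_ne_zero.mpr h2), by linear_combination hc, by ring⟩
      push_neg at h1 h2
      exact ⟨1, 0, Or.inl one_ne_zero, by simp [h1], by simp [h2]⟩
    have hsum : ∑ i, ![-(c1 * a0 + c2 * b0), c1, c2] i • ![(1 : E), z.1, z.2] i = 0 := by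
      simp only [Fin.sum_univ_three, Matrix.cons_val_zero, Matrix.cons_val_one, Matrix.head_cons,
        Matrix.cons_val_two, Matrix.tail_cons, Algebra.smul_def, map_neg, map_add, map_mul]
      rw [mul_one, hα, hβ]
      have e1 : algebraMap F E (c1 * a1 + c2 * b1) = 0 := by rw [hc1, map_zero]
      have e2 : algebraMap F E (c1 * a2 + c2 * b2) = 0 := by rw [hc2, map_zero]
      rw [map_add, map_mul, map_mul] at e1 e2
      linear_combination e1 * d + e2 * d ^ 2
    rcases hcne with h | h
    · exact h (hzi _ hsum 1)
    · exact h (hzi _ hsum 2)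
  -- extraction: any diagonal matrix relates coordinates by scaling
  have hext : ∀ (w' : E × E) (m' : GL (Fin 3) F), (∀ i j : Fin 3, i ≠ j → m'.val i j = 0) →
      mact F E m'.val w' = z → ∃ l u : F,
      z.1 = algebraMap F E l * w'.1 ∧ z.2 = algebraMap F E u * w'.2 := by
    intro w' m' hdiag hact
    have e01 := hdiag 0 1 (by decide)
    have e02 := hdiag 0 2 (by decide)
    have e10 := hdiag 1 0 (by decide)
    have e12 := hdiag 1 2 (by decide)
    have e20 := hdiag 2 0 (by decide)
    have e21 := hdiag 2 1 (by decide)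
    refine ⟨m'.val 0 0 / m'.val 2 2, m'.val 1 1 / m'.val 2 2, ?_, ?_⟩
    · have h1 := congrArg Prod.fst hact
      simp only [mact, mden, e01, e02, e20, e21, map_zero, zero_mul, add_zero, zero_add] at h1
      rw [← h1, map_div₀]
      ring
    · have h1 := congrArg Prod.snd hact
      simp only [mact, mden, e10, e12, e20, e21, map_zero, zero_mul, add_zero, zero_add] at h1
      rw [← h1, map_div₀]
      ring
  
  -- map nonzero helper
  have hmap : ∀ c : F, c ≠ 0 → algebraMap F E c ≠ 0 := fun c hc h =>
    hc ((algebraMap F E).injective (h.trans (map_zero _).symm))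
  by_cases hA : a1 = 0 <;> by_cases hB : b2 = 0
  · -- a1 = 0, b2 = 0
    have h20 : a2 * b1 ≠ 0 := fun h => hdet (by rw [hA, zero_mul, h])
    have ha2 := left_ne_zero_of_mul h20
    have hb1 := right_ne_zero_of_mul h20
    refine ⟨(algebraMap F E (a0 / a2) + d ^ 2, algebraMap F E (b0 / b1) + d),
      ⟨?_, dgl a2 b1 ha2 hb1, dgl_diag a2 b1 ha2 hb1, ?_⟩, ?_⟩
    · simp only [Set.mem_union, Set.mem_setOf_eq]
      exact Or.inr ⟨a0 / a2, b0 / b1, rfl⟩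
    · rw [mact_dgl]
      refine Prod.ext ?_ ?_ <;> dsimp only
      · rw [hα, hA, map_zero, zero_mul, add_zero, map_div₀]
        field_simp [hmap a2 ha2]
      · rw [hβ, hB, map_zero, zero_mul, add_zero, map_div₀]
        field_simp [hmap b1 hb1]
    · rintro w' ⟨hmem, m', hdiag, hact⟩
      obtain ⟨l, u, hl, hu⟩ := hext w' m' hdiag hact
      simp only [Set.mem_union, Set.mem_setOf_eq] at hmem
      rcases hmem with (((⟨x, y, r, s, hys, hw⟩ | ⟨x, r, s, hs, hw⟩) | ⟨x, r, y, hy, hw⟩) |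
        ⟨x, y, hw⟩) <;> subst hw <;> dsimp only at hl hu
      · obtain ⟨h0, h1, h2⟩ := hinj a0 a1 a2 (l * x) l (l * y)
          ((hα.symm.trans hl).trans (by rw [map_mul, map_mul]; ring))
        have : a2 = 0 := by rw [h2, ← h1, hA, zero_mul]
        exact absurd this ha2
      · obtain ⟨k0, k1, k2⟩ := hinj b0 b1 b2 (u * r) u (u * s)
          ((hβ.symm.trans hu).trans (by rw [map_mul, map_mul]; ring))
        have : b2 ≠ 0 := by rw [k2, ← k1]; exact mul_ne_zero hb1 hs
        exact absurd hB this
      · obtain ⟨h0, h1, h2⟩ := hinj a0 a1 a2 (l * x) (l * y) l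
          ((hα.symm.trans hl).trans (by rw [map_mul, map_mul]; ring))
        have : a1 ≠ 0 := by rw [h1, ← h2]; exact mul_ne_zero ha2 hy
        exact absurd hA this
      · obtain ⟨h0, h1, h2⟩ := hinj a0 a1 a2 (l * x) 0 l
          ((hα.symm.trans hl).trans (by rw [map_mul, map_zero]; ring))
        obtain ⟨k0, k1, k2⟩ := hinj b0 b1 b2 (u * y) u 0
          ((hβ.symm.trans hu).trans (by rw [map_mul, map_zero]; ring))
        subst h2; subst k1
        have hx : x = a0 / a2 := by rw [eq_div_iff ha2]; linear_combination -h0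
        have hy' : y = b0 / b1 := by rw [eq_div_iff hb1]; linear_combination -k0
        rw [hx, hy']
  · -- a1 = 0, b2 ≠ 0
    have h20 : a2 * b1 ≠ 0 := fun h => hdet (by rw [hA, zero_mul, h])
    have ha2 := left_ne_zero_of_mul h20
    have hb1 := right_ne_zero_of_mul h20
    refine ⟨(algebraMap F E (a0 / a2) + d ^ 2,
             algebraMap F E (b0 / b1) + d + algebraMap F E (b2 / b1) * d ^ 2),
      ⟨?_, dgl a2 b1 ha2 hb1, dgl_diag a2 b1 ha2 hb1, ?_⟩, ?_⟩
    · simp only [Set.mem_union, Set.mem_setOf_eq]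
      exact Or.inl (Or.inl (Or.inr ⟨a0 / a2, b0 / b1, b2 / b1, div_ne_zero hB hb1, rfl⟩))
    · rw [mact_dgl]
      refine Prod.ext ?_ ?_ <;> dsimp only
      · rw [hα, hA, map_zero, zero_mul, add_zero, map_div₀]
        field_simp [hmap a2 ha2]
      · rw [hβ, map_div₀, map_div₀]
        field_simp [hmap b1 hb1]
    · rintro w' ⟨hmem, m', hdiag, hact⟩
      obtain ⟨l, u, hl, hu⟩ := hext w' m' hdiag hact
      simp only [Set.mem_union, Set.mem_setOf_eq] at hmem
      rcases hmem with (((⟨x, y, r, s, hys, hw⟩ | ⟨x, r, s, hs, hw⟩) | ⟨x, r, y, hy, hw⟩) |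
        ⟨x, y, hw⟩) <;> subst hw <;> dsimp only at hl hu
      · obtain ⟨h0, h1, h2⟩ := hinj a0 a1 a2 (l * x) l (l * y)
          ((hα.symm.trans hl).trans (by rw [map_mul, map_mul]; ring))
        have : a2 = 0 := by rw [h2, ← h1, hA, zero_mul]
        exact absurd this ha2
      · obtain ⟨h0, h1, h2⟩ := hinj a0 a1 a2 (l * x) 0 l
          ((hα.symm.trans hl).trans (by rw [map_mul, map_zero]; ring))
        obtain ⟨k0, k1, k2⟩ := hinj b0 b1 b2 (u * r) u (u * s)
          ((hβ.symm.trans hu).trans (by rw [map_mul, map_mul]; ring))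
        subst h2; subst k1
        have hx : x = a0 / a2 := by rw [eq_div_iff ha2]; linear_combination -h0
        have hr : r = b0 / b1 := by rw [eq_div_iff hb1]; linear_combination -k0
        have hs' : s = b2 / b1 := by rw [eq_div_iff hb1]; linear_combination -k2
        rw [hx, hr, hs']
      · obtain ⟨k0, k1, k2⟩ := hinj b0 b1 b2 (u * r) u 0
          ((hβ.symm.trans hu).trans (by rw [map_mul, map_zero]; ring))
        exact absurd k2 hB
      · obtain ⟨k0, k1, k2⟩ := hinj b0 b1 b2 (u * y) u 0
          ((hβ.symm.trans hu).trans (by rw [map_mul, map_zero]; ring))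
        exact absurd k2 hB
  · -- a1 ≠ 0, b2 = 0
    have h20 : a2 * b1 ≠ 0 := fun h => hdet (by rw [hB, mul_zero, h])
    have ha2 := left_ne_zero_of_mul h20
    have hb1 := right_ne_zero_of_mul h20
    refine ⟨(algebraMap F E (a0 / a2) + algebraMap F E (a1 / a2) * d + d ^ 2,
             algebraMap F E (b0 / b1) + d),
      ⟨?_, dgl a2 b1 ha2 hb1, dgl_diag a2 b1 ha2 hb1, ?_⟩, ?_⟩
    · simp only [Set.mem_union, Set.mem_setOf_eq]
      exact Or.inl (Or.inr ⟨a0 / a2, b0 / b1, a1 / a2, div_ne_zero hA ha2, rfl⟩)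
    · rw [mact_dgl]
      refine Prod.ext ?_ ?_ <;> dsimp only
      · rw [hα, map_div₀, map_div₀]
        field_simp [hmap a2 ha2]
      · rw [hβ, hB, map_zero, zero_mul, add_zero, map_div₀]
        field_simp [hmap b1 hb1]
    · rintro w' ⟨hmem, m', hdiag, hact⟩
      obtain ⟨l, u, hl, hu⟩ := hext w' m' hdiag hact
      simp only [Set.mem_union, Set.mem_setOf_eq] at hmem
      rcases hmem with (((⟨x, y, r, s, hys, hw⟩ | ⟨x, r, s, hs, hw⟩) | ⟨x, r, y, hy, hw⟩) |
        ⟨x, y, hw⟩) <;> subst hw <;> dsimp only at hl hu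
      · obtain ⟨k0, k1, k2⟩ := hinj b0 b1 b2 (u * r) (u * s) u
          ((hβ.symm.trans hu).trans (by rw [map_mul, map_mul]; ring))
        have : b1 = 0 := by rw [k1, ← k2, hB, zero_mul]
        exact absurd this hb1
      · obtain ⟨h0, h1, h2⟩ := hinj a0 a1 a2 (l * x) 0 l
          ((hα.symm.trans hl).trans (by rw [map_mul, map_zero]; ring))
        exact absurd h1 hA
      · obtain ⟨h0, h1, h2⟩ := hinj a0 a1 a2 (l * x) (l * y) l
          ((hα.symm.trans hl).trans (by rw [map_mul, map_mul]; ring))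
        obtain ⟨k0, k1, k2⟩ := hinj b0 b1 b2 (u * r) u 0
          ((hβ.symm.trans hu).trans (by rw [map_mul, map_zero]; ring))
        subst h2; subst k1
        have hx : x = a0 / a2 := by rw [eq_div_iff ha2]; linear_combination -h0
        have hy' : y = a1 / a2 := by rw [eq_div_iff ha2]; linear_combination -h1
        have hr : r = b0 / b1 := by rw [eq_div_iff hb1]; linear_combination -k0
        rw [hx, hy', hr]
      · obtain ⟨h0, h1, h2⟩ := hinj a0 a1 a2 (l * x) 0 l
          ((hα.symm.trans hl).trans (by rw [map_mul, map_zero]; ring))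
        exact absurd h1 hA
  · -- a1 ≠ 0, b2 ≠ 0
    refine ⟨(algebraMap F E (a0 / a1) + d + algebraMap F E (a2 / a1) * d ^ 2,
             algebraMap F E (b0 / b2) + algebraMap F E (b1 / b2) * d + d ^ 2),
      ⟨?_, dgl a1 b2 hA hB, dgl_diag a1 b2 hA hB, ?_⟩, ?_⟩
    · simp only [Set.mem_union, Set.mem_setOf_eq]
      refine Or.inl (Or.inl (Or.inl ⟨a0 / a1, a2 / a1, b0 / b2, b1 / b2, ?_, rfl⟩))
      intro h
      apply hdet
      field_simp at h
      linear_combination -h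
    · rw [mact_dgl]
      refine Prod.ext ?_ ?_ <;> dsimp only
      · rw [hα, map_div₀, map_div₀]
        field_simp [hmap a1 hA]
      · rw [hβ, map_div₀, map_div₀]
        field_simp [hmap b2 hB]
    · rintro w' ⟨hmem, m', hdiag, hact⟩
      obtain ⟨l, u, hl, hu⟩ := hext w' m' hdiag hact
      simp only [Set.mem_union, Set.mem_setOf_eq] at hmem
      rcases hmem with (((⟨x, y, r, s, hys, hw⟩ | ⟨x, r, s, hs, hw⟩) | ⟨x, r, y, hy, hw⟩) |
        ⟨x, y, hw⟩) <;> subst hw <;> dsimp only at hl hu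
      · obtain ⟨h0, h1, h2⟩ := hinj a0 a1 a2 (l * x) l (l * y)
          ((hα.symm.trans hl).trans (by rw [map_mul, map_mul]; ring))
        obtain ⟨k0, k1, k2⟩ := hinj b0 b1 b2 (u * r) (u * s) u
          ((hβ.symm.trans hu).trans (by rw [map_mul, map_mul]; ring))
        subst h1; subst k2
        have hx : x = a0 / a1 := by rw [eq_div_iff hA]; linear_combination -h0
        have hy' : y = a2 / a1 := by rw [eq_div_iff hA]; linear_combination -h2
        have hr : r = b0 / b2 := by rw [eq_div_iff hB]; linear_combination -k0
        have hs' : s = b1 / b2 := by rw [eq_div_iff hB]; linear_combination -k1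
        rw [hx, hy', hr, hs']
      · obtain ⟨h0, h1, h2⟩ := hinj a0 a1 a2 (l * x) 0 l
          ((hα.symm.trans hl).trans (by rw [map_mul, map_zero]; ring))
        exact absurd h1 hA
      · obtain ⟨k0, k1, k2⟩ := hinj b0 b1 b2 (u * r) u 0
          ((hβ.symm.trans hu).trans (by rw [map_mul, map_zero]; ring))
        exact absurd k2 hB
      · obtain ⟨h0, h1, h2⟩ := hinj a0 a1 a2 (l * x) 0 l
          ((hα.symm.trans hl).trans (by rw [map_mul, map_zero]; ring))
        exact absurd h1 hA
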